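/- If H is a graph on n vertices with at least one edge, and D = {x_{i_1},...,x_{i_k}} is a maximal independent set of H with k < n, then for any choice of n−1−k whisker vertices y_j with j ∉ {i_1,...,i_k} omitting one index m ∉ {i_1,...,i_k}, the independent set F = D ∪ {y_j : j ∉ {i_1,...,i_k}, j ≠ m} of w(H) is contained in exactly one maximal independent set of w(H), namely F ∪ {y_m}. -/

import Mathlib

def whisker {n : ℕ} (H : SimpleGraph (Fin n)) : SimpleGraph (Fin n ⊕ Fin n) :=
  SimpleGraph.fromRel (fun u v =>
    (∃ i j, H.Adj i j ∧ u = Sum.inl i ∧ v = Sum.inl j) ∨ ∃ i, u = Sum.inl i ∧ v = Sum.inr i)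

def IsIndep {V : Type*} (G : SimpleGraph V) (S : Set V) : Prop :=
  ∀ u ∈ S, ∀ v ∈ S, ¬ G.Adj u v

/-- A maximal independent set: an independent set not properly contained in
another independent set. -/
def MaxIndep {V : Type*} [DecidableEq V] (G : SimpleGraph V) (F : Finset V) : Prop :=
  IsIndep G ↑F ∧ ∀ F' : Finset V, IsIndep G ↑F' → F ⊆ F' → F = F'

lemma wadj_ll {n : ℕ} (H : SimpleGraph (Fin n)) (i j : Fin n) :
    (whisker H).Adj (Sum.inl i) (Sum.inl j) ↔ H.Adj i j := by
  constructor
  · rintro ⟨hne, h⟩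
    rcases h with (⟨a,b,hab,ha,hb⟩|⟨a,ha,hb⟩) | (⟨a,b,hab,ha,hb⟩|⟨a,ha,hb⟩) <;>
      simp_all
    exact hab.symm
  · intro h
    exact ⟨by simpa using h.ne, Or.inl (Or.inl ⟨i, j, h, rfl, rfl⟩)⟩

lemma wadj_lr {n : ℕ} (H : SimpleGraph (Fin n)) (i j : Fin n) :
    (whisker H).Adj (Sum.inl i) (Sum.inr j) ↔ i = j := by
  constructor
  · rintro ⟨hne, h⟩
    rcases h with (⟨a,b,hab,ha,hb⟩|⟨a,ha,hb⟩) | (⟨a,b,hab,ha,hb⟩|⟨a,ha,hb⟩) <;> simp_all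
  · rintro rfl
    exact ⟨by simp, Or.inl (Or.inr ⟨i, rfl, rfl⟩)⟩

lemma wadj_rr {n : ℕ} (H : SimpleGraph (Fin n)) (i j : Fin n) :
    ¬ (whisker H).Adj (Sum.inr i) (Sum.inr j) := by
  rintro ⟨hne, h⟩
  rcases h with (⟨a,b,hab,ha,hb⟩|⟨a,ha,hb⟩) | (⟨a,b,hab,ha,hb⟩|⟨a,ha,hb⟩) <;> simp_all

/-- If `H` has an edge and `D` is a maximal independent set of `H` with
`|D| < n`, then for any `m ∉ D` the independent set
`F = {x_i : i ∈ D} ∪ {y_j : j ∉ D, j ≠ m}` of `w(H)` is contained in exactly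
one maximal independent set of `w(H)`, namely `F ∪ {y_m}`. -/
theorem boundary_face_from_maxIndep {n : ℕ} (H : SimpleGraph (Fin n))
    (hedge : ∃ a b : Fin n, H.Adj a b)
    (D : Finset (Fin n)) (hD : MaxIndep H D) (hDcard : D.card < n)
    (m : Fin n) (hm : m ∉ D)
    (F : Finset (Fin n ⊕ Fin n))
    (hFdef : F = D.image Sum.inl ∪ ((Finset.univ \ D).erase m).image Sum.inr) :
    ∀ M : Finset (Fin n ⊕ Fin n),
      (MaxIndep (whisker H) M ∧ F ⊆ M) ↔ M = F ∪ {Sum.inr m} := by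
  -- membership characterization
  have hmemF : ∀ u : Fin n ⊕ Fin n, u ∈ F ↔
      (∃ d ∈ D, u = Sum.inl d) ∨ (∃ j, j ≠ m ∧ j ∉ D ∧ u = Sum.inr j) := by
    intro u
    subst hFdef
    simp only [Finset.mem_union, Finset.mem_image, Finset.mem_erase, Finset.mem_sdiff,
      Finset.mem_univ, true_and]
    constructor
    · rintro (⟨d, hd, rfl⟩ | ⟨j, ⟨hj1, hj2⟩, rfl⟩)
      · exact Or.inl ⟨d, hd, rfl⟩
      · exact Or.inr ⟨j, hj1, hj2, rfl⟩
    · rintro (⟨d, hd, rfl⟩ | ⟨j, hj1, hj2, rfl⟩)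
      · exact Or.inl ⟨d, hd, rfl⟩
      · exact Or.inr ⟨j, ⟨hj1, hj2⟩, rfl⟩
  have hmemFm : ∀ u : Fin n ⊕ Fin n, u ∈ F ∪ ({Sum.inr m} : Finset _) ↔
      (∃ d ∈ D, u = Sum.inl d) ∨ (∃ j, j ∉ D ∧ u = Sum.inr j) := by
    intro u
    simp only [Finset.mem_union, Finset.mem_singleton, hmemF]
    constructor
    · rintro ((⟨d,hd,rfl⟩|⟨j,hj1,hj2,rfl⟩) | rfl)
      · exact Or.inl ⟨d, hd, rfl⟩
      · exact Or.inr ⟨j, hj2, rfl⟩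
      · exact Or.inr ⟨m, hm, rfl⟩
    · rintro (⟨d,hd,rfl⟩ | ⟨j, hj, rfl⟩)
      · exact Or.inl (Or.inl ⟨d, hd, rfl⟩)
      · by_cases hjm : j = m
        · exact Or.inr (by rw [hjm])
        · exact Or.inl (Or.inr ⟨j, hjm, hj, rfl⟩)
  -- domination
  have hdom : ∀ j, j ∉ D → ∃ d ∈ D, H.Adj j d := by
    intro j hj
    by_contra hcon
    push_neg at hcon
    have hind : IsIndep H ↑(insert j D) := by
      intro u hu v hv
      simp only [Finset.coe_insert, Set.mem_insert_iff, Finset.mem_coe] at hu hv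
      rcases hu with rfl | hu <;> rcases hv with rfl | hv
      · exact H.loopless.irrefl _
      · exact hcon v hv
      · intro h; exact hcon u hu h.symm
      · exact hD.1 u hu v hv
    have := hD.2 _ hind (Finset.subset_insert j D)
    exact hj (this ▸ Finset.mem_insert_self j D)
  -- F ∪ {inr m} is independent
  have hFmdef : IsIndep (whisker H) ↑(F ∪ ({Sum.inr m} : Finset (Fin n ⊕ Fin n))) := by
    intro u hu v hv
    rw [Finset.mem_coe, hmemFm] at hu hv
    rcases hu with ⟨d,hd,rfl⟩ | ⟨j,hj,rfl⟩ <;> rcases hv with ⟨d',hd',rfl⟩ | ⟨j',hj',rfl⟩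
    · rw [wadj_ll]; exact hD.1 d hd d' hd'
    · rw [wadj_lr]; rintro rfl; exact hj' hd
    · intro h; rw [SimpleGraph.adj_comm, wadj_lr] at h; exact hj (h ▸ hd')
    · exact wadj_rr H j j'
  -- key: any indep set containing F is inside F ∪ {inr m}
  have hkey : ∀ S : Set (Fin n ⊕ Fin n), IsIndep (whisker H) S → ↑F ⊆ S →
      ∀ v ∈ S, v ∈ F ∪ ({Sum.inr m} : Finset _) := by
    intro S hS hFS v hv
    rw [hmemFm]
    rcases v with i | i
    · refine Or.inl ⟨i, ?_, rfl⟩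
      by_contra hi
      obtain ⟨d, hd, hadj⟩ := hdom i hi
      have hdS : (Sum.inl d : Fin n ⊕ Fin n) ∈ S :=
        hFS (by rw [Finset.mem_coe, hmemF]; exact Or.inl ⟨d, hd, rfl⟩)
      exact hS _ hv _ hdS ((wadj_ll H i d).2 hadj)
    · refine Or.inr ⟨i, ?_, rfl⟩
      intro hi
      have hiS : (Sum.inl i : Fin n ⊕ Fin n) ∈ S :=
        hFS (by rw [Finset.mem_coe, hmemF]; exact Or.inl ⟨i, hi, rfl⟩)
      exact hS _ hiS _ hv ((wadj_lr H i i).2 rfl)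
  intro M
  constructor
  · rintro ⟨⟨hMind, hMmax⟩, hFM⟩
    have hsub : M ⊆ F ∪ ({Sum.inr m} : Finset _) := by
      intro v hv
      exact hkey ↑M hMind (by exact_mod_cast hFM) v (by exact_mod_cast hv)
    exact hMmax _ hFmdef hsub
  · rintro rfl
    refine ⟨⟨hFmdef, ?_⟩, Finset.subset_union_left⟩
    intro F' hF' hsub
    apply Finset.Subset.antisymm hsub
    intro v hv
    exact hkey ↑F' hF'
      (by intro x hx; exact_mod_cast hsub (Finset.mem_union_left _ (by exact_mod_cast hx)))
      v (by exact_mod_cast hv)
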